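/- The total number of fixed points of all involutions of [n] equals n·t_{n−1}; hence the average number of fixed points of a uniformly random involution of [n] equals n·t_{n−1}/t_n, and this average is (1+o(1))·√n as n → ∞. -/

import Mathlib

open Filter Equiv Equiv.Perm

section Fix

variable {α : Type*} [DecidableEq α]

omit [DecidableEq α] in
lemma inv_apply_iff {φ : Perm α} (h : φ * φ = 1) (x y : α) : φ x = y ↔ x = φ y := by
  constructor
  · rintro rfl
    have := congrArg (fun ψ : Perm α => ψ x) h
    simpa [Perm.mul_apply] using this.symm
  · rintro rfl
    have := congrArg (fun ψ : Perm α => ψ y) h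
    simpa [Perm.mul_apply] using this

/-- involutions fixing `a` are equivalent to involutions of the complement of `a`. -/
def invFixEquiv (a : α) :
    {φ : Perm α // φ * φ = 1 ∧ φ a = a} ≃ {ψ : Perm {x // x ≠ a} // ψ * ψ = 1} where
  toFun φ := ⟨φ.1.subtypePerm (fun x => not_congr
      ((inv_apply_iff φ.2.1 x a).trans (by rw [φ.2.2]))),
    by
      ext x
      exact congrArg (fun ψ : Perm α => ψ (x : α)) φ.2.1⟩
  invFun ψ := ⟨ofSubtype ψ.1, by rw [← map_mul, ψ.2, map_one],
    ofSubtype_apply_of_not_mem _ (by simp)⟩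
  left_inv φ := Subtype.ext (ofSubtype_subtypePerm (p := fun x => x ≠ a)
    (fun x => not_congr ((inv_apply_iff φ.2.1 x a).trans (by rw [φ.2.2])))
    fun x hx => fun hxa => hx (hxa ▸ φ.2.2))
  right_inv ψ := Subtype.ext (subtypePerm_ofSubtype ψ.1)

/-- involutions sending `a` to `b ≠ a` are equivalent to involutions of the complement. -/
def invPairEquiv (a b : α) (hab : a ≠ b) :
    {φ : Perm α // φ * φ = 1 ∧ φ a = b} ≃ {ψ : Perm {x // x ≠ a ∧ x ≠ b} // ψ * ψ = 1} where
  toFun φ := ⟨φ.1.subtypePerm (fun x => by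
      have hba : φ.1 b = a := by rw [inv_apply_iff φ.2.1, φ.2.2]
      have hA : φ.1 x = a ↔ x = b := (inv_apply_iff φ.2.1 x a).trans (by rw [φ.2.2])
      have hB : φ.1 x = b ↔ x = a := (inv_apply_iff φ.2.1 x b).trans (by rw [hba])
      simp only [ne_eq, hA, hB]
      tauto),
    by
      ext x
      exact congrArg (fun ψ : Perm α => ψ (x : α)) φ.2.1⟩
  invFun ψ := by
    have hff : ofSubtype ψ.1 * ofSubtype ψ.1 = 1 := by rw [← map_mul, ψ.2, map_one]
    have hfa : ofSubtype ψ.1 a = a :=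
      ofSubtype_apply_of_not_mem (p := fun x => x ≠ a ∧ x ≠ b) _ (by simp)
    have hfb : ofSubtype ψ.1 b = b :=
      ofSubtype_apply_of_not_mem (p := fun x => x ≠ a ∧ x ≠ b) _ (by simp)
    refine ⟨ofSubtype ψ.1 * Equiv.swap a b, ?_, ?_⟩
    · ext x
      simp only [Perm.mul_apply, Perm.one_apply]
      rcases eq_or_ne x a with rfl | hxa
      · rw [Equiv.swap_apply_left, hfb, Equiv.swap_apply_right, hfa]
      rcases eq_or_ne x b with rfl | hxb
      · rw [Equiv.swap_apply_right, hfa, Equiv.swap_apply_left, hfb]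
      · have hy : ofSubtype ψ.1 x ≠ a ∧ ofSubtype ψ.1 x ≠ b := by
          rw [ofSubtype_apply_of_mem (a := x) ψ.1 ⟨hxa, hxb⟩]
          exact (ψ.1 ⟨x, hxa, hxb⟩).2
        rw [Equiv.swap_apply_of_ne_of_ne hxa hxb,
          Equiv.swap_apply_of_ne_of_ne hy.1 hy.2]
        simpa [Perm.mul_apply] using congrArg (fun q : Perm α => q x) hff
    · rw [Perm.mul_apply, Equiv.swap_apply_left, hfb]
  left_inv φ := by
    apply Subtype.ext
    have hba : φ.1 b = a := by rw [inv_apply_iff φ.2.1, φ.2.2]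
    ext x
    simp only [Perm.mul_apply]
    rcases eq_or_ne x a with rfl | hxa
    · rw [Equiv.swap_apply_left,
        ofSubtype_apply_of_not_mem _ (by simp), φ.2.2]
    rcases eq_or_ne x b with rfl | hxb
    · rw [Equiv.swap_apply_right,
        ofSubtype_apply_of_not_mem _ (by simp), hba]
    · rw [Equiv.swap_apply_of_ne_of_ne hxa hxb,
        ofSubtype_apply_of_mem (a := x) _ ⟨hxa, hxb⟩]
      rfl
  right_inv ψ := by
    apply Subtype.ext
    ext x
    simp only [subtypePerm_apply, Perm.mul_apply,
      Equiv.swap_apply_of_ne_of_ne x.2.1 x.2.2]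
    rw [ofSubtype_apply_of_mem (a := (x : α)) ψ.1 x.2]

end Fix

noncomputable def tInv (n : ℕ) : ℕ := Nat.card {φ : Equiv.Perm (Fin n) // φ * φ = 1}

lemma invCard_congr {α β : Type*} (e : α ≃ β) :
    Nat.card {φ : Perm α // φ * φ = 1} = Nat.card {ψ : Perm β // ψ * ψ = 1} := by
  apply Nat.card_congr
  refine (e.permCongr).subtypeEquiv fun φ => ?_
  constructor
  · intro h
    ext y
    have h2 : φ (φ (e.symm y)) = e.symm y := by
      have := congrArg (fun ψ : Perm α => ψ (e.symm y)) h
      simpa [Perm.mul_apply] using this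
    simp [Equiv.permCongr_apply, Perm.mul_apply, h2]
  · intro h
    ext x
    have := congrArg (fun ψ : Perm β => e.symm (ψ (e x))) h
    simpa [Equiv.permCongr_apply, Perm.mul_apply] using this

lemma fix_fiber (n : ℕ) (t : Fin n) :
    Nat.card {φ : Perm (Fin n) // φ * φ = 1 ∧ φ t = t} = tInv (n - 1) := by
  rw [Nat.card_congr (invFixEquiv t), tInv]
  refine invCard_congr (Fintype.equivFinOfCardEq ?_)
  simp [Fintype.card_subtype_compl, Fintype.card_fin]

lemma pair_fiber (n : ℕ) (a b : Fin (n + 2)) (hab : a ≠ b) :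
    Nat.card {φ : Perm (Fin (n + 2)) // φ * φ = 1 ∧ φ a = b} = tInv n := by
  rw [Nat.card_congr (invPairEquiv a b hab), tInv]
  refine invCard_congr (Fintype.equivFinOfCardEq ?_)
  have h : (Finset.univ.filter fun x : Fin (n + 2) => x ≠ a ∧ x ≠ b) = ({a, b} : Finset _)ᶜ := by
    ext x; simp [not_or, and_comm]
  rw [Fintype.card_subtype, h, Finset.card_compl, Finset.card_insert_of_notMem (by simp [hab]),
    Finset.card_singleton, Fintype.card_fin]
  omega

lemma tInv_card (n : ℕ) :
    tInv n = (Finset.univ.filter fun φ : Perm (Fin n) => φ * φ = 1).card := by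
  rw [tInv, Nat.card_eq_fintype_card, Fintype.card_subtype]

lemma fiber_card (n : ℕ) (p : Perm (Fin n) → Prop) [DecidablePred p] :
    Nat.card {φ : Perm (Fin n) // p φ} = (Finset.univ.filter p).card := by
  rw [Nat.card_eq_fintype_card, Fintype.card_subtype]

lemma tInv_rec (n : ℕ) : tInv (n + 2) = tInv (n + 1) + (n + 1) * tInv n := by
  classical
  set a : Fin (n + 2) := Fin.last (n + 1) with ha
  rw [tInv_card]
  rw [Finset.card_eq_sum_card_fiberwise (f := fun φ : Perm (Fin (n+2)) => φ a)
    (t := Finset.univ) (fun _ _ => Finset.mem_univ _)]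
  have hfib : ∀ k : Fin (n + 2),
      ((Finset.univ.filter fun φ : Perm (Fin (n+2)) => φ * φ = 1).filter
        fun φ => φ a = k).card
      = Nat.card {φ : Perm (Fin (n+2)) // φ * φ = 1 ∧ φ a = k} := by
    intro k
    rw [Finset.filter_filter, fiber_card]
  rw [← Finset.add_sum_erase _ _ (Finset.mem_univ a)]
  have h1 : ((Finset.univ.filter fun φ : Perm (Fin (n+2)) => φ * φ = 1).filter
      fun φ => φ a = a).card = tInv (n + 1) := by
    rw [hfib a, fix_fiber]
    norm_num
  have h2 : ∀ k ∈ Finset.univ.erase a,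
      ((Finset.univ.filter fun φ : Perm (Fin (n+2)) => φ * φ = 1).filter
        fun φ => φ a = k).card = tInv n := by
    intro k hk
    rw [hfib k, pair_fiber _ _ _ (Ne.symm (Finset.ne_of_mem_erase hk))]
  rw [h1, Finset.sum_congr rfl h2, Finset.sum_const, smul_eq_mul,
    Finset.card_erase_of_mem (Finset.mem_univ a), Finset.card_univ, Fintype.card_fin]
  norm_num

lemma part1 (n : ℕ) :
    (∑ φ ∈ Finset.univ.filter (fun φ : Equiv.Perm (Fin n) => φ * φ = 1),
        Nat.card {t : Fin n // φ t = t}) = n * tInv (n - 1) := by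
  classical
  have hcard : ∀ φ : Perm (Fin n), Nat.card {t : Fin n // φ t = t}
      = ∑ t : Fin n, if φ t = t then 1 else 0 := by
    intro φ
    rw [Nat.card_eq_fintype_card, Fintype.card_subtype, Finset.card_filter]
  calc (∑ φ ∈ Finset.univ.filter (fun φ : Perm (Fin n) => φ * φ = 1),
          Nat.card {t : Fin n // φ t = t})
      = ∑ φ ∈ Finset.univ.filter (fun φ : Perm (Fin n) => φ * φ = 1),
          ∑ t : Fin n, if φ t = t then 1 else 0 := Finset.sum_congr rfl fun φ _ => hcard φ
    _ = ∑ t : Fin n, ∑ φ ∈ Finset.univ.filter (fun φ : Perm (Fin n) => φ * φ = 1),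
          if φ t = t then 1 else 0 := Finset.sum_comm
    _ = ∑ t : Fin n, tInv (n - 1) := by
        refine Finset.sum_congr rfl fun t _ => ?_
        rw [← Finset.card_filter, Finset.filter_filter, ← fiber_card, fix_fiber]
    _ = n * tInv (n - 1) := by rw [Finset.sum_const, smul_eq_mul, Finset.card_univ,
          Fintype.card_fin]

lemma tInv_pos (n : ℕ) : 0 < tInv n := by
  rw [tInv]
  haveI : Nonempty {φ : Perm (Fin n) // φ * φ = 1} := ⟨⟨1, one_mul 1⟩⟩
  exact Nat.card_pos

lemma tInv_zero : tInv 0 = 1 := by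
  rw [tInv, Nat.card_eq_one_iff_unique]
  exact ⟨⟨fun f g => Subtype.ext (Equiv.ext fun x => x.elim0)⟩, ⟨⟨1, one_mul 1⟩⟩⟩

lemma tInv_one : tInv 1 = 1 := by
  rw [tInv, Nat.card_eq_one_iff_unique]
  refine ⟨⟨fun f g => Subtype.ext (Equiv.ext fun x => ?_)⟩, ⟨⟨1, one_mul 1⟩⟩⟩
  have : ∀ y : Fin 1, y = 0 := by decide
  rw [this (f.1 x), this (g.1 x)]

lemma tInv_bounds (n : ℕ) :
    Real.sqrt (n + 1) * tInv n ≤ tInv (n + 1) ∧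
      (tInv (n + 1) : ℝ) ≤ (Real.sqrt (n + 1) + 1) * tInv n := by
  induction n with
  | zero => norm_num [tInv_zero, tInv_one]
  | succ m ih =>
    obtain ⟨ihl, ihu⟩ := ih
    have hrec : (tInv (m + 2) : ℝ) = tInv (m + 1) + (m + 1) * tInv m := by
      rw [tInv_rec]; push_cast; ring
    have hcast : ((m : ℝ) + 1) + 1 = (m : ℝ) + 2 := by ring
    set s := Real.sqrt ((m : ℝ) + 1) with hs
    have ht' : Real.sqrt (((m : ℕ) + 1 : ℕ) + 1) = Real.sqrt ((m : ℝ) + 2) := by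
      push_cast; ring_nf
    set t := Real.sqrt ((m : ℝ) + 2) with hts
    have hs0 : 0 ≤ s := Real.sqrt_nonneg _
    have ht0 : 0 ≤ t := Real.sqrt_nonneg _
    have hs2 : s ^ 2 = (m : ℝ) + 1 := Real.sq_sqrt (by positivity)
    have ht2 : t ^ 2 = (m : ℝ) + 2 := Real.sq_sqrt (by positivity)
    have hst : s ≤ t := Real.sqrt_le_sqrt (by linarith)
    have ht1 : 1 ≤ t := by nlinarith
    have hT0 : (0 : ℝ) ≤ tInv m := Nat.cast_nonneg _
    have hT1 : (0 : ℝ) ≤ tInv (m + 1) := Nat.cast_nonneg _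
    have hkey : t * (s + 1) ≤ s ^ 2 + s + 1 := by
      nlinarith [sq_nonneg (t * (s + 1) - (s ^ 2 + s + 1)), sq_nonneg s,
        mul_nonneg ht0 (by linarith : (0:ℝ) ≤ s + 1), sq_nonneg (s - t), sq_nonneg (s + t)]
    have hkey' : (t - 1) * (s + 1) ≤ s ^ 2 := by nlinarith [hkey]
    have hTm2 : ((m : ℕ) + 1 + 1 : ℕ) = m + 2 := by omega
    rw [hTm2, ht']
    constructor
    · rw [hrec]
      nlinarith [mul_le_mul_of_nonneg_left ihu (by linarith : (0:ℝ) ≤ t - 1),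
        mul_le_mul_of_nonneg_right hkey' hT0]
    · rw [hrec]
      nlinarith [mul_le_mul_of_nonneg_left ihl hs0,
        mul_le_mul_of_nonneg_right hst hT1]

theorem involution_avg_fixed_points :
    (∀ n : ℕ,
      (∑ φ ∈ Finset.univ.filter (fun φ : Equiv.Perm (Fin n) => φ * φ = 1),
          Nat.card {t : Fin n // φ t = t}) = n * tInv (n - 1)) ∧
    Tendsto (fun n : ℕ => ((n * tInv (n - 1) : ℕ) : ℝ) / (tInv n : ℝ) / Real.sqrt n)
      atTop (nhds 1) := by
  refine ⟨part1, ?_⟩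
  set f : ℕ → ℝ := fun n => ((n * tInv (n - 1) : ℕ) : ℝ) / (tInv n : ℝ) / Real.sqrt n with hf
  have hmain : ∀ n : ℕ, 1 ≤ n →
      Real.sqrt n / (Real.sqrt n + 1) ≤ f n ∧ f n ≤ 1 := by
    intro n hn
    obtain ⟨m, rfl⟩ := Nat.exists_eq_add_of_le hn
    obtain ⟨ihl, ihu⟩ := tInv_bounds m
    have hscast : Real.sqrt ((1 + m : ℕ) : ℝ) = Real.sqrt ((m : ℝ) + 1) := by
      push_cast; ring_nf
    set s := Real.sqrt ((m : ℝ) + 1) with hs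
    have hs0 : 0 < s := Real.sqrt_pos.2 (by positivity)
    have hs2 : s ^ 2 = (m : ℝ) + 1 := Real.sq_sqrt (by positivity)
    have hA : (0 : ℝ) < tInv m := by exact_mod_cast tInv_pos m
    have hB : (0 : ℝ) < tInv (m + 1) := by exact_mod_cast tInv_pos (m + 1)
    have hm : (1 + m) - 1 = m := by omega
    have h1m : ((1 + m : ℕ) : ℝ) = (m : ℝ) + 1 := by push_cast; ring
    have hBc : ((tInv (1 + m) : ℕ) : ℝ) = (tInv (m + 1) : ℝ) := by rw [Nat.add_comm]
    have hfn : f (1 + m) = ((m : ℝ) + 1) * (tInv m : ℝ) / (tInv (m + 1) : ℝ) / s := by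
      rw [hf]
      simp only [hm]
      rw [hscast, hBc]
      push_cast
      ring_nf
    rw [hfn, hscast]
    constructor
    · rw [div_div, div_le_div_iff₀ (by positivity) (by positivity)]
      nlinarith [mul_le_mul_of_nonneg_left ihu (by positivity : (0:ℝ) ≤ (m : ℝ) + 1)]
    · rw [div_div, div_le_one (by positivity)]
      nlinarith [mul_le_mul_of_nonneg_left ihl hs0.le]
  have hsq : Tendsto (fun n : ℕ => Real.sqrt n) atTop atTop := by
    apply Filter.tendsto_atTop_atTop.2
    intro b
    refine ⟨⌈b⌉₊ ^ 2, fun n hn => ?_⟩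
    calc b ≤ (⌈b⌉₊ : ℝ) := Nat.le_ceil b
      _ = Real.sqrt (((⌈b⌉₊ : ℕ) : ℝ) ^ 2) := (Real.sqrt_sq (Nat.cast_nonneg _)).symm
      _ ≤ Real.sqrt n := Real.sqrt_le_sqrt (by exact_mod_cast hn)
  have hg : Tendsto (fun n : ℕ => Real.sqrt n / (Real.sqrt n + 1)) atTop (nhds 1) := by
    have h2 : Tendsto (fun n : ℕ => Real.sqrt n + 1) atTop atTop :=
      Filter.tendsto_atTop_add_const_right _ 1 hsq
    have h3 : Tendsto (fun n : ℕ => 1 / (Real.sqrt n + 1)) atTop (nhds 0) := by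
      simpa [one_div, Pi.inv_def] using h2.inv_tendsto_atTop
    have heq : (fun n : ℕ => Real.sqrt n / (Real.sqrt n + 1))
        = fun n : ℕ => 1 - 1 / (Real.sqrt n + 1) := by
      funext n
      have h : Real.sqrt n + 1 ≠ 0 := by positivity
      field_simp
      ring
    rw [heq]
    simpa using tendsto_const_nhds.sub h3
  refine tendsto_of_tendsto_of_tendsto_of_le_of_le' hg tendsto_const_nhds ?_ ?_
  · exact Filter.eventually_atTop.2 ⟨1, fun n hn => (hmain n hn).1⟩
  · exact Filter.eventually_atTop.2 ⟨1, fun n hn => (hmain n hn).2⟩
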